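/- arXiv:2010.06162 — 4 statements merged into one kernel-verified Lean document; each statement's English description precedes it below -/
import Mathlib

section
/- Generalized ties pairwise commute: for every n ≥ 2 and all indices 1 ≤ i < j ≤ n and 1 ≤ k < l ≤ n, the equality η_{i,j} η_{k,l} = η_{k,l} η_{i,j} holds in the tied braid monoid TM_n. -/
/-!
The tied braid monoid `TM n` (n ≥ 2), presented by generators
σ_1,…,σ_{n−1}, σ_1⁻¹,…,σ_{n−1}⁻¹, η_1,…,η_{n−1} subject to the relations:
σ_i σ_i⁻¹ = σ_i⁻¹ σ_i = 1; σ_i σ_{i+1} σ_i = σ_{i+1} σ_i σ_{i+1};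
σ_i σ_j = σ_j σ_i for |i−j| ≥ 2; η_i η_j = η_j η_i for all i, j;
η_i σ_i = σ_i η_i; η_i σ_j = σ_j η_i for |i−j| ≥ 2;
η_i σ_j σ_i^ε = σ_j σ_i^ε η_j for |i−j| = 1, ε = ±1;
η_i η_j σ_i = η_j σ_i η_j = σ_i η_i η_j for |i−j| = 1; η_i² = η_i.
-/

/-- Generators of the tied braid monoid: σ_i, σ_i⁻¹ and η_i for 1 ≤ i ≤ n−1. -/
inductive TMGen (n : ℕ) : Type
  | sig (i : ℕ) (h : 1 ≤ i ∧ i ≤ n - 1) : TMGen n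
  | sigInv (i : ℕ) (h : 1 ≤ i ∧ i ≤ n - 1) : TMGen n
  | eta (i : ℕ) (h : 1 ≤ i ∧ i ≤ n - 1) : TMGen n

/-- The word σ_i in the free monoid on the generators. -/
def wS (n i : ℕ) : FreeMonoid (TMGen n) :=
  if h : 1 ≤ i ∧ i ≤ n - 1 then FreeMonoid.of (TMGen.sig i h) else 1

/-- The word σ_i⁻¹ in the free monoid on the generators. -/
def wSI (n i : ℕ) : FreeMonoid (TMGen n) :=
  if h : 1 ≤ i ∧ i ≤ n - 1 then FreeMonoid.of (TMGen.sigInv i h) else 1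

/-- The word η_i in the free monoid on the generators. -/
def wE (n i : ℕ) : FreeMonoid (TMGen n) :=
  if h : 1 ≤ i ∧ i ≤ n - 1 then FreeMonoid.of (TMGen.eta i h) else 1

/-- The defining relations of the tied braid monoid `TM n`. -/
inductive TMRel (n : ℕ) : FreeMonoid (TMGen n) → FreeMonoid (TMGen n) → Prop
  | inv_right (i : ℕ) (h : 1 ≤ i ∧ i ≤ n - 1) :
      TMRel n (wS n i * wSI n i) 1
  | inv_left (i : ℕ) (h : 1 ≤ i ∧ i ≤ n - 1) :
      TMRel n (wSI n i * wS n i) 1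
  | braid (i : ℕ) (h : 1 ≤ i ∧ i + 1 ≤ n - 1) :
      TMRel n (wS n i * wS n (i+1) * wS n i) (wS n (i+1) * wS n i * wS n (i+1))
  | sig_comm (i j : ℕ) (hi : 1 ≤ i ∧ i ≤ n - 1) (hj : 1 ≤ j ∧ j ≤ n - 1)
      (hij : i + 2 ≤ j ∨ j + 2 ≤ i) :
      TMRel n (wS n i * wS n j) (wS n j * wS n i)
  | eta_comm (i j : ℕ) (hi : 1 ≤ i ∧ i ≤ n - 1) (hj : 1 ≤ j ∧ j ≤ n - 1) :
      TMRel n (wE n i * wE n j) (wE n j * wE n i)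
  | eta_sig (i : ℕ) (h : 1 ≤ i ∧ i ≤ n - 1) :
      TMRel n (wE n i * wS n i) (wS n i * wE n i)
  | eta_sig_far (i j : ℕ) (hi : 1 ≤ i ∧ i ≤ n - 1) (hj : 1 ≤ j ∧ j ≤ n - 1)
      (hij : i + 2 ≤ j ∨ j + 2 ≤ i) :
      TMRel n (wE n i * wS n j) (wS n j * wE n i)
  | eta_slide_pos (i j : ℕ) (hi : 1 ≤ i ∧ i ≤ n - 1) (hj : 1 ≤ j ∧ j ≤ n - 1)
      (hij : j = i + 1 ∨ i = j + 1) :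
      TMRel n (wE n i * wS n j * wS n i) (wS n j * wS n i * wE n j)
  | eta_slide_neg (i j : ℕ) (hi : 1 ≤ i ∧ i ≤ n - 1) (hj : 1 ≤ j ∧ j ≤ n - 1)
      (hij : j = i + 1 ∨ i = j + 1) :
      TMRel n (wE n i * wS n j * wSI n i) (wS n j * wSI n i * wE n j)
  | eta_eta_sig₁ (i j : ℕ) (hi : 1 ≤ i ∧ i ≤ n - 1) (hj : 1 ≤ j ∧ j ≤ n - 1)
      (hij : j = i + 1 ∨ i = j + 1) :
      TMRel n (wE n i * wE n j * wS n i) (wE n j * wS n i * wE n j)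
  | eta_eta_sig₂ (i j : ℕ) (hi : 1 ≤ i ∧ i ≤ n - 1) (hj : 1 ≤ j ∧ j ≤ n - 1)
      (hij : j = i + 1 ∨ i = j + 1) :
      TMRel n (wE n j * wS n i * wE n j) (wS n i * wE n i * wE n j)
  | eta_idem (i : ℕ) (h : 1 ≤ i ∧ i ≤ n - 1) :
      TMRel n (wE n i * wE n i) (wE n i)

/-- The tied braid monoid `TM n`: the quotient of the free monoid on the
generators by the congruence generated by the defining relations. -/
def TM (n : ℕ) := (conGen (TMRel n)).Quotient

instance (n : ℕ) : Monoid (TM n) :=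
  inferInstanceAs (Monoid ((conGen (TMRel n)).Quotient))

/-- The generator σ_i of `TM n` (defined for 1 ≤ i ≤ n−1; junk value 1 otherwise). -/
def TM.s (n i : ℕ) : TM n := (conGen (TMRel n)).mk' (wS n i)

/-- The generator σ_i⁻¹ of `TM n` (defined for 1 ≤ i ≤ n−1; junk value 1 otherwise). -/
def TM.sInv (n i : ℕ) : TM n := (conGen (TMRel n)).mk' (wSI n i)

/-- The generator η_i of `TM n` (defined for 1 ≤ i ≤ n−1; junk value 1 otherwise). -/
def TM.e (n i : ℕ) : TM n := (conGen (TMRel n)).mk' (wE n i)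

/-- The generalized tie η_{i,j} = σ_i σ_{i+1} ⋯ σ_{j−2} η_{j−1} σ_{j−2}⁻¹ ⋯ σ_{i+1}⁻¹ σ_i⁻¹,
for 1 ≤ i < j ≤ n (in particular η_{i,i+1} = η_i). -/
def TM.genTie (n i j : ℕ) : TM n :=
  (((List.range' i (j - 1 - i)).map (TM.s n)).prod) * TM.e n (j - 1) *
    (((List.range' i (j - 1 - i)).reverse.map (TM.sInv n)).prod)

namespace TML
variable {n : ℕ}

lemma q_rel {x y : FreeMonoid (TMGen n)} (h : TMRel n x y) :
    (conGen (TMRel n)).mk' x = (conGen (TMRel n)).mk' y :=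
  (Con.eq _).mpr (ConGen.Rel.of x y h)

lemma s_oor {i : ℕ} (h : ¬(1 ≤ i ∧ i ≤ n - 1)) : TM.s n i = 1 := by
  simp [TM.s, wS, h]; rfl
lemma sInv_oor {i : ℕ} (h : ¬(1 ≤ i ∧ i ≤ n - 1)) : TM.sInv n i = 1 := by
  simp [TM.sInv, wSI, h]; rfl
lemma e_oor {i : ℕ} (h : ¬(1 ≤ i ∧ i ≤ n - 1)) : TM.e n i = 1 := by
  simp [TM.e, wE, h]; rfl

lemma sT (i : ℕ) : TM.s n i * TM.sInv n i = 1 := by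
  by_cases h : 1 ≤ i ∧ i ≤ n - 1
  · have := q_rel (TMRel.inv_right i h); rw [map_mul] at this
    simp [TM.s, TM.sInv] at this ⊢; exact this
  · simp [s_oor h, sInv_oor h]

lemma Ts (i : ℕ) : TM.sInv n i * TM.s n i = 1 := by
  by_cases h : 1 ≤ i ∧ i ≤ n - 1
  · have := q_rel (TMRel.inv_left i h); rw [map_mul] at this
    simp [TM.s, TM.sInv] at this ⊢; exact this
  · simp [s_oor h, sInv_oor h]

lemma braid (i : ℕ) (h1 : 1 ≤ i) (h2 : i + 2 ≤ n) :
    TM.s n i * TM.s n (i+1) * TM.s n i = TM.s n (i+1) * TM.s n i * TM.s n (i+1) := by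
  have h : 1 ≤ i ∧ i + 1 ≤ n - 1 := ⟨h1, by omega⟩
  have := q_rel (TMRel.braid i h); rw [map_mul, map_mul, map_mul, map_mul] at this
  simp [TM.s] at this ⊢; exact this

lemma ee (i j : ℕ) : TM.e n i * TM.e n j = TM.e n j * TM.e n i := by
  by_cases hi : 1 ≤ i ∧ i ≤ n - 1
  · by_cases hj : 1 ≤ j ∧ j ≤ n - 1
    · have := q_rel (TMRel.eta_comm i j hi hj); rw [map_mul, map_mul] at this
      simp [TM.e] at this ⊢; exact this
    · simp [e_oor hj]
  · simp [e_oor hi]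

lemma es (i : ℕ) : TM.e n i * TM.s n i = TM.s n i * TM.e n i := by
  by_cases h : 1 ≤ i ∧ i ≤ n - 1
  · have := q_rel (TMRel.eta_sig i h); rw [map_mul, map_mul] at this
    simp [TM.e, TM.s] at this ⊢; exact this
  · simp [e_oor h, s_oor h]

lemma ssf (i j : ℕ) (hij : i + 2 ≤ j ∨ j + 2 ≤ i) :
    TM.s n i * TM.s n j = TM.s n j * TM.s n i := by
  by_cases hi : 1 ≤ i ∧ i ≤ n - 1
  · by_cases hj : 1 ≤ j ∧ j ≤ n - 1
    · have := q_rel (TMRel.sig_comm i j hi hj hij); rw [map_mul, map_mul] at this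
      simp [TM.s] at this ⊢; exact this
    · simp [s_oor hj]
  · simp [s_oor hi]

lemma esf (i j : ℕ) (hij : i + 2 ≤ j ∨ j + 2 ≤ i) :
    TM.e n i * TM.s n j = TM.s n j * TM.e n i := by
  by_cases hi : 1 ≤ i ∧ i ≤ n - 1
  · by_cases hj : 1 ≤ j ∧ j ≤ n - 1
    · have := q_rel (TMRel.eta_sig_far i j hi hj hij); rw [map_mul, map_mul] at this
      simp [TM.e, TM.s] at this ⊢; exact this
    · simp [s_oor hj]
  · simp [e_oor hi]

lemma slideP (i j : ℕ) (hi : 1 ≤ i ∧ i ≤ n - 1) (hj : 1 ≤ j ∧ j ≤ n - 1)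
    (hij : j = i + 1 ∨ i = j + 1) :
    TM.e n i * TM.s n j * TM.s n i = TM.s n j * TM.s n i * TM.e n j := by
  have := q_rel (TMRel.eta_slide_pos i j hi hj hij)
  rw [map_mul, map_mul, map_mul, map_mul] at this
  simp [TM.e, TM.s] at this ⊢; exact this

lemma slideN (i j : ℕ) (hi : 1 ≤ i ∧ i ≤ n - 1) (hj : 1 ≤ j ∧ j ≤ n - 1)
    (hij : j = i + 1 ∨ i = j + 1) :
    TM.e n i * TM.s n j * TM.sInv n i = TM.s n j * TM.sInv n i * TM.e n j := by
  have := q_rel (TMRel.eta_slide_neg i j hi hj hij)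
  rw [map_mul, map_mul, map_mul, map_mul] at this
  simp [TM.e, TM.s, TM.sInv] at this ⊢; exact this

/-- continuation forms -/
lemma toCont2 {a b c d : TM n} (h : a * b = c * d) (R : TM n) :
    a * (b * R) = c * (d * R) := by rw [← mul_assoc, h, mul_assoc]

lemma toCont3 {a b c x y z : TM n} (h : a * b * c = x * y * z) (R : TM n) :
    a * (b * (c * R)) = x * (y * (z * R)) := by
  rw [← mul_assoc, ← mul_assoc, h, mul_assoc, mul_assoc]

lemma toCont1 {a b : TM n} (h : a * b = 1) (R : TM n) : a * (b * R) = R := by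
  rw [← mul_assoc, h, one_mul]

lemma sTc (i : ℕ) (R : TM n) : TM.s n i * (TM.sInv n i * R) = R := toCont1 (sT i) R
lemma Tsc (i : ℕ) (R : TM n) : TM.sInv n i * (TM.s n i * R) = R := toCont1 (Ts i) R

lemma cancel {u v x y : TM n} (hvu : v * u = 1) (h : u * x = u * y) : x = y := by
  have := congrArg (v * ·) h
  simpa [← mul_assoc, hvu] using this

lemma flip {u v x y : TM n} (huv : u * v = 1) (hvu : v * u = 1) (h : u * x = y * u) :
    v * y = x * v := by
  calc v * y = v * y * (u * v) := by rw [huv, mul_one]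
    _ = v * (y * u) * v := by simp only [mul_assoc]
    _ = v * (u * x) * v := by rw [h]
    _ = v * u * x * v := by simp only [mul_assoc]
    _ = x * v := by rw [hvu, one_mul]

lemma eT (i : ℕ) : TM.e n i * TM.sInv n i = TM.sInv n i * TM.e n i :=
  (flip (sT i) (Ts i) (es i).symm).symm

lemma eTf (i j : ℕ) (hij : i + 2 ≤ j ∨ j + 2 ≤ i) :
    TM.e n i * TM.sInv n j = TM.sInv n j * TM.e n i :=
  (flip (sT j) (Ts j) (esf i j hij).symm).symm

lemma sTf (i j : ℕ) (hij : i + 2 ≤ j ∨ j + 2 ≤ i) :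
    TM.s n i * TM.sInv n j = TM.sInv n j * TM.s n i :=
  (flip (sT j) (Ts j) (ssf i j hij).symm).symm

lemma TTf (i j : ℕ) (hij : i + 2 ≤ j ∨ j + 2 ≤ i) :
    TM.sInv n i * TM.sInv n j = TM.sInv n j * TM.sInv n i :=
  flip (sT i) (Ts i) (sTf i j hij)

end TML
namespace TML
variable {n : ℕ}

lemma sandwich {x y : TM n} (h : x * y = 1) (u v : TM n) : u * x * (y * v) = u * v := by
  rw [mul_assoc, ← mul_assoc x, h, one_mul]

lemma slideP' (i j : ℕ) (hi : 1 ≤ i ∧ i ≤ n - 1) (hj : 1 ≤ j ∧ j ≤ n - 1)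
    (hij : j = i + 1 ∨ i = j + 1) :
    TM.e n j * (TM.sInv n i * TM.sInv n j) = TM.sInv n i * TM.sInv n j * TM.e n i := by
  have huv : (TM.s n j * TM.s n i) * (TM.sInv n i * TM.sInv n j) = 1 := by
    rw [sandwich (sT i), sT]
  have hvu : (TM.sInv n i * TM.sInv n j) * (TM.s n j * TM.s n i) = 1 := by
    rw [sandwich (Ts j), Ts]
  have h : (TM.s n j * TM.s n i) * TM.e n j = TM.e n i * (TM.s n j * TM.s n i) := by
    rw [← mul_assoc]; exact (slideP i j hi hj hij).symm
  exact (flip huv hvu h).symm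

lemma slideN' (i j : ℕ) (hi : 1 ≤ i ∧ i ≤ n - 1) (hj : 1 ≤ j ∧ j ≤ n - 1)
    (hij : j = i + 1 ∨ i = j + 1) :
    TM.e n j * (TM.s n i * TM.sInv n j) = TM.s n i * TM.sInv n j * TM.e n i := by
  have huv : (TM.s n j * TM.sInv n i) * (TM.s n i * TM.sInv n j) = 1 := by
    rw [sandwich (Ts i), sT]
  have hvu : (TM.s n i * TM.sInv n j) * (TM.s n j * TM.sInv n i) = 1 := by
    rw [sandwich (Ts j), sT]
  have h : (TM.s n j * TM.sInv n i) * TM.e n j = TM.e n i * (TM.s n j * TM.sInv n i) := by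
    rw [← mul_assoc]; exact (slideN i j hi hj hij).symm
  exact (flip huv hvu h).symm

/-- η_i commutes with σ_j² for adjacent i j. -/
lemma sq (i j : ℕ) (hi : 1 ≤ i ∧ i ≤ n - 1) (hj : 1 ≤ j ∧ j ≤ n - 1)
    (hij : j = i + 1 ∨ i = j + 1) :
    TM.e n i * (TM.s n j * TM.s n j) = TM.s n j * (TM.s n j * TM.e n i) := by
  have h1 : TM.e n i * TM.s n j = TM.s n j * (TM.sInv n i * (TM.e n j * TM.s n i)) := by
    have := congrArg (· * TM.s n i) (slideN i j hi hj hij)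
    simp only [mul_assoc, Ts, mul_one] at this
    exact this
  have h2 : TM.e n j * (TM.s n i * TM.s n j) = TM.s n i * (TM.s n j * TM.e n i) :=
    by simpa [mul_assoc] using slideP j i hj hi hij.symm
  calc TM.e n i * (TM.s n j * TM.s n j)
      = TM.e n i * TM.s n j * TM.s n j := by rw [mul_assoc]
    _ = TM.s n j * (TM.sInv n i * (TM.e n j * TM.s n i)) * TM.s n j := by rw [h1]
    _ = TM.s n j * (TM.sInv n i * (TM.e n j * (TM.s n i * TM.s n j))) := by
        simp only [mul_assoc]
    _ = TM.s n j * (TM.sInv n i * (TM.s n i * (TM.s n j * TM.e n i))) := by rw [h2]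
    _ = TM.s n j * (TM.s n j * TM.e n i) := by rw [Tsc]

/-- inverse braid relation -/
lemma ibr (i : ℕ) (h1 : 1 ≤ i) (h2 : i + 2 ≤ n) :
    TM.sInv n i * (TM.sInv n (i+1) * TM.sInv n i)
      = TM.sInv n (i+1) * (TM.sInv n i * TM.sInv n (i+1)) := by
  set u := TM.s n i * (TM.s n (i+1) * TM.s n i) with hu
  have hbr : u = TM.s n (i+1) * (TM.s n i * TM.s n (i+1)) := by
    rw [hu, ← mul_assoc, braid i h1 h2, mul_assoc]
  have hux : u * (TM.sInv n i * (TM.sInv n (i+1) * TM.sInv n i)) = 1 := by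
    rw [hu]; simp only [mul_assoc]; rw [sTc, sTc, sT]
  have hyu : (TM.sInv n (i+1) * (TM.sInv n i * TM.sInv n (i+1))) * u = 1 := by
    rw [hbr]; simp only [mul_assoc]; rw [Tsc, Tsc, Ts]
  calc TM.sInv n i * (TM.sInv n (i+1) * TM.sInv n i)
      = (TM.sInv n (i+1) * (TM.sInv n i * TM.sInv n (i+1))) * u
          * (TM.sInv n i * (TM.sInv n (i+1) * TM.sInv n i)) := by rw [hyu, one_mul]
    _ = (TM.sInv n (i+1) * (TM.sInv n i * TM.sInv n (i+1)))
          * (u * (TM.sInv n i * (TM.sInv n (i+1) * TM.sInv n i))) := by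
        simp only [mul_assoc]
    _ = TM.sInv n (i+1) * (TM.sInv n i * TM.sInv n (i+1)) := by rw [hux, mul_one]

lemma br1 (i : ℕ) (h1 : 1 ≤ i) (h2 : i + 2 ≤ n) :
    TM.s n i * (TM.sInv n (i+1) * TM.sInv n i)
      = TM.sInv n (i+1) * (TM.sInv n i * TM.s n (i+1)) := by
  have key : TM.sInv n (i+1) * TM.sInv n i
      = TM.sInv n i * (TM.sInv n (i+1) * (TM.sInv n i * TM.s n (i+1))) := by
    have := congrArg (· * TM.s n (i+1)) (ibr i h1 h2)
    simp only [mul_assoc] at this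
    rw [Ts (i+1), mul_one] at this
    exact this.symm
  rw [key, sTc]

lemma br2 (i : ℕ) (h1 : 1 ≤ i) (h2 : i + 2 ≤ n) :
    TM.sInv n (i+1) * (TM.s n i * TM.s n (i+1))
      = TM.s n i * (TM.s n (i+1) * TM.sInv n i) := by
  apply cancel (Ts (i+1)) (u := TM.s n (i+1))
  rw [sTc]
  have hb := toCont3 (braid i h1 h2) (TM.sInv n i)
  rw [← hb, sT i, mul_one]

end TML
namespace TML
variable {n : ℕ}

lemma lbB1 (i : ℕ) (h1 : 1 ≤ i) (h2 : i + 2 ≤ n) :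
    TM.s n i * (TM.s n i * TM.s n (i+1))
      = TM.s n (i+1) * (TM.s n i * (TM.s n (i+1) * (TM.s n (i+1) * TM.sInv n i))) := by
  rw [← toCont3 (braid i h1 h2) (TM.s n (i+1) * TM.sInv n i), ← br2 i h1 h2, sTc]

lemma lbB2 (i : ℕ) (h1 : 1 ≤ i) (h2 : i + 2 ≤ n) :
    TM.s n i * (TM.s n (i+1) * (TM.s n (i+1) * (TM.sInv n i * TM.sInv n (i+1))))
      = TM.sInv n (i+1) * (TM.s n i * TM.s n i) := by
  have t' : TM.sInv n (i+1) * (TM.s n i * (TM.s n i * TM.s n (i+1)))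
      = TM.s n i * (TM.s n (i+1) * (TM.s n (i+1) * TM.sInv n i)) := by
    rw [lbB1 i h1 h2, Tsc]
  have h := congrArg (· * TM.sInv n (i+1)) t'.symm
  simp only [mul_assoc] at h
  rw [sT (i+1), mul_one] at h
  exact h

lemma tie_base (a : ℕ) : TM.genTie n a (a+1) = TM.e n a := by
  simp [TM.genTie]

lemma tie_unfold (a b : ℕ) (h : a + 1 < b) :
    TM.genTie n a b = TM.s n a * TM.genTie n (a+1) b * TM.sInv n a := by
  have h1 : b - 1 - a = (b - 1 - (a+1)) + 1 := by omega
  rw [TM.genTie, TM.genTie, h1, List.range'_succ]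
  simp only [List.map_cons, List.prod_cons, List.reverse_cons, List.map_append,
    List.prod_append, List.map_nil, List.prod_nil, List.map_cons, List.prod_cons, mul_one]
  simp only [mul_assoc]

lemma A_S : ∀ (d a b k : ℕ), b - a = d → a < b → k + 2 ≤ a →
    ∀ R : TM n, TM.s n k * (TM.genTie n a b * R) = TM.genTie n a b * (TM.s n k * R) := by
  intro d
  induction d using Nat.strong_induction_on with
  | _ d IH =>
    intro a b k hd hab hka R
    by_cases hb1 : b = a + 1
    · subst hb1; rw [tie_base]
      exact toCont2 (esf a k (Or.inr hka)).symm R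
    · have hb2 : a + 1 < b := by omega
      rw [tie_unfold a b hb2]
      simp only [mul_assoc]
      rw [toCont2 (ssf k a (Or.inl hka))]
      rw [IH (b - (a+1)) (by omega) (a+1) b k rfl (by omega) (by omega)]
      rw [toCont2 (sTf k a (Or.inl hka))]

lemma A_T (a b k : ℕ) (hab : a < b) (hka : k + 2 ≤ a) :
    ∀ R : TM n, TM.sInv n k * (TM.genTie n a b * R) = TM.genTie n a b * (TM.sInv n k * R) := by
  have hp : TM.s n k * TM.genTie n a b = TM.genTie n a b * TM.s n k := by
    have := A_S (n := n) (b - a) a b k rfl hab hka 1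
    simpa using this
  exact fun R => toCont2 (flip (sT k) (Ts k) hp) R

lemma Bsq : ∀ (d k q : ℕ), q - k = d → 1 ≤ k → k + 2 ≤ q → q ≤ n →
    ∀ R : TM n, TM.s n k * (TM.s n k * (TM.genTie n (k+1) q * R))
      = TM.genTie n (k+1) q * (TM.s n k * (TM.s n k * R)) := by
  intro d
  induction d using Nat.strong_induction_on with
  | _ d IH =>
    intro k q hd hk hkq hq R
    by_cases hb1 : q = k + 2
    · subst hb1; rw [tie_base]
      have hsq := sq (n := n) (k+1) k ⟨by omega, by omega⟩ ⟨hk, by omega⟩ (Or.inr rfl)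
      have := congrArg (· * R) hsq
      simp only [mul_assoc] at this
      exact this.symm
    · have hb2 : k + 2 < q := by omega
      rw [tie_unfold (k+1) q (by omega)]
      simp only [mul_assoc]
      have c1 : ∀ R' : TM n, TM.s n k * (TM.s n k * (TM.s n (k+1) * R'))
          = TM.s n (k+1) * (TM.s n k * (TM.s n (k+1) * (TM.s n (k+1) * (TM.sInv n k * R')))) := by
        intro R'
        have := congrArg (· * R') (lbB1 k hk (by omega))
        simp only [mul_assoc] at this
        exact this
      have c2 : ∀ R' : TM n, TM.s n k * (TM.s n (k+1) * (TM.s n (k+1) * (TM.sInv n k * (TM.sInv n (k+1) * R'))))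
          = TM.sInv n (k+1) * (TM.s n k * (TM.s n k * R')) := by
        intro R'
        have := congrArg (· * R') (lbB2 k hk (by omega))
        simp only [mul_assoc] at this
        exact this
      rw [c1]
      rw [A_T (k+2) q k (by omega) (by omega)]
      rw [IH (q - (k+1)) (by omega) (k+1) q rfl (by omega) (by omega) hq]
      rw [A_S (q - (k+2)) (k+2) q k rfl (by omega) (by omega)]
      rw [c2]

end TML
namespace TML
variable {n : ℕ}

def sw (k x : ℕ) : ℕ := if x = k then k + 1 else if x = k + 1 then k else x

lemma aux0 (a : ℕ) (h1 : 1 ≤ a) (h2 : a + 2 ≤ n) :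
    TM.e n (a+1) * (TM.sInv n a * TM.s n (a+1))
      = TM.sInv n a * (TM.s n (a+1) * TM.e n a) := by
  have hP' := slideP' (n := n) a (a+1) ⟨h1, by omega⟩ ⟨by omega, by omega⟩ (Or.inl rfl)
  have h := congrArg (· * (TM.s n (a+1) * TM.s n (a+1))) hP'
  simp only [mul_assoc] at h
  rw [Tsc] at h
  rw [sq (n := n) a (a+1) ⟨h1, by omega⟩ ⟨by omega, by omega⟩ (Or.inl rfl)] at h
  rw [Tsc] at h
  exact h

lemma aux1 (a : ℕ) (h1 : 1 ≤ a) (h2 : a + 2 ≤ n) :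
    TM.s n (a+1) * (TM.s n a * (TM.e n (a+1) * TM.sInv n a))
      = TM.e n a * TM.s n (a+1) := by
  have hb : TM.e n a * (TM.s n (a+1) * (TM.s n a * TM.sInv n a))
      = TM.s n (a+1) * (TM.s n a * (TM.e n (a+1) * TM.sInv n a)) := by
    have := congrArg (· * TM.sInv n a)
      (slideP (n := n) a (a+1) ⟨h1, by omega⟩ ⟨by omega, by omega⟩ (Or.inl rfl))
    simpa [mul_assoc] using this
  rw [← hb, sT, mul_one]

lemma aux1c (a : ℕ) (h1 : 1 ≤ a) (h2 : a + 2 ≤ n) (R : TM n) :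
    TM.s n (a+1) * (TM.s n a * (TM.e n (a+1) * (TM.sInv n a * R)))
      = TM.e n a * (TM.s n (a+1) * R) := by
  have := congrArg (· * R) (aux1 a h1 h2)
  simp only [mul_assoc] at this
  exact this

lemma aux2 (a : ℕ) (h1 : 1 ≤ a) (h2 : a + 2 ≤ n) :
    TM.s n (a+1) * TM.e n a
      = TM.s n a * (TM.e n (a+1) * (TM.sInv n a * TM.s n (a+1))) := by
  rw [aux0 a h1 h2, sTc]

lemma aux2c (a : ℕ) (h1 : 1 ≤ a) (h2 : a + 2 ≤ n) (R : TM n) :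
    TM.s n (a+1) * (TM.e n a * R)
      = TM.s n a * (TM.e n (a+1) * (TM.sInv n a * (TM.s n (a+1) * R))) := by
  have := congrArg (· * R) (aux2 a h1 h2)
  simp only [mul_assoc] at this
  exact this

lemma conjS : ∀ (d a b k : ℕ), b - a = d → 1 ≤ a → a < b → b ≤ n → 1 ≤ k → k + 1 ≤ n →
    ∀ R : TM n, TM.s n k * (TM.genTie n a b * R)
      = TM.genTie n (min (sw k a) (sw k b)) (max (sw k a) (sw k b)) * (TM.s n k * R) := by
  intro d
  induction d using Nat.strong_induction_on with
  | _ d IH =>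
    intro a b k hd ha hab hb hk1 hk2 R
    by_cases hbase : b = a + 1
    · subst hbase
      by_cases hc1 : k = a
      · subst hc1
        obtain ⟨hp1, hp2⟩ : min (sw k k) (sw k (k+1)) = k ∧ max (sw k k) (sw k (k+1)) = k + 1 := by
          simp only [sw]; split_ifs <;> omega
        rw [hp1, hp2, tie_base]
        exact toCont2 (es k).symm R
      by_cases hc2 : k + 1 = a
      · subst hc2
        obtain ⟨hp1, hp2⟩ : min (sw k (k+1)) (sw k (k+1+1)) = k ∧
            max (sw k (k+1)) (sw k (k+1+1)) = k + 2 := by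
          simp only [sw]; split_ifs <;> omega
        rw [hp1, hp2, tie_base, tie_unfold k (k+2) (by omega), tie_base]
        simp only [mul_assoc]
        rw [Tsc]
      by_cases hc3 : k = a + 1
      · subst hc3
        obtain ⟨hp1, hp2⟩ : min (sw (a+1) a) (sw (a+1) (a+1)) = a ∧
            max (sw (a+1) a) (sw (a+1) (a+1)) = a + 2 := by
          simp only [sw]; split_ifs <;> omega
        rw [hp1, hp2, tie_base, tie_unfold a (a+2) (by omega), tie_base]
        simp only [mul_assoc]
        rw [aux2c (n := n) a ha (by omega)]
      · obtain ⟨hp1, hp2⟩ : min (sw k a) (sw k (a+1)) = a ∧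
            max (sw k a) (sw k (a+1)) = a + 1 := by
          simp only [sw]; split_ifs <;> omega
        rw [hp1, hp2, tie_base]
        exact toCont2 (esf a k (by omega)).symm R
    · have hb2 : a + 1 < b := by omega
      by_cases hc1 : k + 1 = a
      · subst hc1
        obtain ⟨hp1, hp2⟩ : min (sw k (k+1)) (sw k b) = k ∧ max (sw k (k+1)) (sw k b) = b := by
          simp only [sw]; split_ifs <;> omega
        rw [hp1, hp2, tie_unfold k b (by omega)]
        simp only [mul_assoc]
        rw [Tsc]
      by_cases hc2 : k = a
      · subst hc2
        obtain ⟨hp1, hp2⟩ : min (sw k k) (sw k b) = k + 1 ∧ max (sw k k) (sw k b) = b := by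
          simp only [sw]; split_ifs <;> omega
        rw [hp1, hp2, tie_unfold k b hb2]
        simp only [mul_assoc]
        rw [Bsq (b - k) k b rfl hk1 (by omega) hb, sTc]
      by_cases hc3 : k = a + 1
      · subst hc3
        by_cases hc3b : b = a + 2
        · subst hc3b
          obtain ⟨hp1, hp2⟩ : min (sw (a+1) a) (sw (a+1) (a+2)) = a ∧
              max (sw (a+1) a) (sw (a+1) (a+2)) = a + 1 := by
            simp only [sw]; split_ifs <;> omega
          rw [hp1, hp2, tie_base, tie_unfold a (a+2) (by omega), tie_base]
          simp only [mul_assoc]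
          rw [aux1c (n := n) a ha (by omega)]
        · obtain ⟨hp1, hp2⟩ : min (sw (a+1) a) (sw (a+1) b) = a ∧
              max (sw (a+1) a) (sw (a+1) b) = b := by
            simp only [sw]; split_ifs <;> omega
          rw [hp1, hp2, tie_unfold a b hb2, tie_unfold (a+1) b (by omega)]
          simp only [mul_assoc]
          have c1 : ∀ R' : TM n, TM.s n a * (TM.sInv n (a+1) * (TM.sInv n a * R'))
              = TM.sInv n (a+1) * (TM.sInv n a * (TM.s n (a+1) * R')) := by
            intro R'
            have := congrArg (· * R') (br1 (n := n) a ha (by omega))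
            simp only [mul_assoc] at this
            exact this
          rw [← toCont3 (braid (n := n) a ha (by omega))]
          rw [A_S (b - (a+2)) (a+2) b a rfl (by omega) (by omega)]
          rw [c1]
      by_cases hc4 : k + 1 = b
      · have hk4 : a + 2 ≤ k := by omega
        obtain ⟨hp1, hp2⟩ : min (sw k a) (sw k b) = a ∧ max (sw k a) (sw k b) = k := by
          simp only [sw]; split_ifs <;> omega
        rw [hp1, hp2, tie_unfold a b hb2, tie_unfold a k (by omega)]
        simp only [mul_assoc]
        rw [toCont2 (ssf k a (Or.inr hk4))]
        rw [IH (b - (a+1)) (by omega) (a+1) b k rfl (by omega) (by omega) hb hk1 hk2]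
        obtain ⟨hq1, hq2⟩ : min (sw k (a+1)) (sw k b) = a + 1 ∧ max (sw k (a+1)) (sw k b) = k := by
          simp only [sw]; split_ifs <;> omega
        rw [hq1, hq2]
        rw [toCont2 (sTf k a (Or.inr hk4))]
      by_cases hc5 : k = b
      · subst hc5
        obtain ⟨hp1, hp2⟩ : min (sw k a) (sw k k) = a ∧ max (sw k a) (sw k k) = k + 1 := by
          simp only [sw]; split_ifs <;> omega
        rw [hp1, hp2, tie_unfold a k hb2, tie_unfold a (k+1) (by omega)]
        simp only [mul_assoc]
        rw [toCont2 (ssf k a (Or.inr (by omega)))]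
        rw [IH (k - (a+1)) (by omega) (a+1) k k rfl (by omega) (by omega) hb hk1 hk2]
        obtain ⟨hq1, hq2⟩ : min (sw k (a+1)) (sw k k) = a + 1 ∧
            max (sw k (a+1)) (sw k k) = k + 1 := by
          simp only [sw]; split_ifs <;> omega
        rw [hq1, hq2]
        rw [toCont2 (sTf k a (Or.inr (by omega)))]
      · obtain ⟨hp1, hp2⟩ : min (sw k a) (sw k b) = a ∧ max (sw k a) (sw k b) = b := by
          simp only [sw]; split_ifs <;> omega
        rw [hp1, hp2, tie_unfold a b hb2]
        simp only [mul_assoc]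
        rw [toCont2 (ssf k a (by omega))]
        rw [IH (b - (a+1)) (by omega) (a+1) b k rfl (by omega) (by omega) hb hk1 hk2]
        obtain ⟨hq1, hq2⟩ : min (sw k (a+1)) (sw k b) = a + 1 ∧ max (sw k (a+1)) (sw k b) = b := by
          simp only [sw]; split_ifs <;> omega
        rw [hq1, hq2]
        rw [toCont2 (sTf k a (by omega))]

end TML
namespace TML
variable {n : ℕ}

lemma conjT (a b k : ℕ) (ha : 1 ≤ a) (hab : a < b) (hb : b ≤ n) (hk1 : 1 ≤ k)
    (hk2 : k + 1 ≤ n) :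
    ∀ R : TM n, TM.sInv n k * (TM.genTie n a b * R)
      = TM.genTie n (min (sw k a) (sw k b)) (max (sw k a) (sw k b)) * (TM.sInv n k * R) := by
  obtain ⟨h1, h2, h3⟩ : 1 ≤ min (sw k a) (sw k b) ∧
      min (sw k a) (sw k b) < max (sw k a) (sw k b) ∧ max (sw k a) (sw k b) ≤ n := by
    simp only [sw]; split_ifs <;> omega
  have hS := conjS (max (sw k a) (sw k b) - min (sw k a) (sw k b)) _ _ k rfl h1 h2 h3 hk1 hk2 1
  simp only [mul_one] at hS
  obtain ⟨h4, h5⟩ : min (sw k (min (sw k a) (sw k b))) (sw k (max (sw k a) (sw k b))) = a ∧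
      max (sw k (min (sw k a) (sw k b))) (sw k (max (sw k a) (sw k b))) = b := by
    simp only [sw]; split_ifs <;> omega
  rw [h4, h5] at hS
  exact fun R => toCont2 (flip (sT k) (Ts k) hS) R

lemma tie_top (a c : ℕ) (ha : 1 ≤ a) (h : a < c) (hc : c + 1 ≤ n) :
    TM.genTie n a (c+1) = TM.s n c * (TM.genTie n a c * TM.sInv n c) := by
  have hS := conjS (c - a) a c c rfl ha h (by omega) (by omega) hc 1
  simp only [mul_one] at hS
  obtain ⟨h4, h5⟩ : min (sw c a) (sw c c) = a ∧ max (sw c a) (sw c c) = c + 1 := by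
    simp only [sw]; split_ifs <;> omega
  rw [h4, h5] at hS
  have h' := congrArg (· * TM.sInv n c) hS
  simp only [mul_assoc] at h'
  rw [sT, mul_one] at h'
  exact h'.symm

lemma Dprime (k : ℕ) (hk : 1 ≤ k) (hkn : k + 3 ≤ n) :
    TM.genTie n (k+1) (k+3) * TM.genTie n k (k+2)
      = TM.genTie n k (k+2) * TM.genTie n (k+1) (k+3) := by
  have d1 : TM.sInv n (k+1) * TM.genTie n k (k+2) = TM.e n k * TM.sInv n (k+1) := by
    have h := conjT (n := n) k (k+2) (k+1) hk (by omega) (by omega) (by omega) (by omega) 1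
    simp only [mul_one] at h
    obtain ⟨h4, h5⟩ : min (sw (k+1) k) (sw (k+1) (k+2)) = k ∧
        max (sw (k+1) k) (sw (k+1) (k+2)) = k + 1 := by
      simp only [sw]; split_ifs <;> omega
    rw [h4, h5, tie_base] at h
    exact h
  have d2 : ∀ R : TM n, TM.genTie n k (k+2) * (TM.s n (k+1) * R)
      = TM.s n (k+1) * (TM.e n k * R) := by
    intro R
    have h := conjS (n := n) 1 k (k+1) (k+1) (by omega) hk (by omega) (by omega) (by omega) (by omega) R
    obtain ⟨h4, h5⟩ : min (sw (k+1) k) (sw (k+1) (k+1)) = k ∧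
        max (sw (k+1) k) (sw (k+1) (k+1)) = k + 2 := by
      simp only [sw]; split_ifs <;> omega
    rw [h4, h5, tie_base] at h
    exact h.symm
  rw [tie_unfold (k+1) (k+3) (by omega), tie_base]
  simp only [mul_assoc]
  rw [d1, toCont2 (ee (k+2) k), d2]

lemma Dbad (k : ℕ) (hk : 1 ≤ k) (hkn : k + 3 ≤ n) :
    ∀ R : TM n, TM.e n (k+1) * (TM.genTie n k (k+3) * R)
      = TM.genTie n k (k+3) * (TM.e n (k+1) * R) := by
  intro R
  have d3 : ∀ R' : TM n, TM.e n (k+1) * (TM.s n k * R')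
      = TM.s n k * (TM.genTie n k (k+2) * R') := by
    intro R'
    have h := conjS (n := n) 2 k (k+2) k (by omega) hk (by omega) (by omega) hk (by omega) R'
    obtain ⟨h4, h5⟩ : min (sw k k) (sw k (k+2)) = k + 1 ∧
        max (sw k k) (sw k (k+2)) = k + 2 := by
      simp only [sw]; split_ifs <;> omega
    rw [h4, h5, tie_base] at h
    exact h.symm
  have d4 : ∀ R' : TM n, TM.genTie n k (k+2) * (TM.sInv n k * R')
      = TM.sInv n k * (TM.e n (k+1) * R') := by
    intro R'
    have h := conjT (n := n) (k+1) (k+2) k (by omega) (by omega) (by omega) hk (by omega) R'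
    obtain ⟨h4, h5⟩ : min (sw k (k+1)) (sw k (k+2)) = k ∧
        max (sw k (k+1)) (sw k (k+2)) = k + 2 := by
      simp only [sw]; split_ifs <;> omega
    rw [h4, h5, tie_base] at h
    exact h.symm
  rw [tie_unfold k (k+3) (by omega)]
  simp only [mul_assoc]
  rw [d3, toCont2 (Dprime k hk hkn).symm, d4]

lemma eComm : ∀ (d i k l : ℕ), l - k = d → 1 ≤ i → i + 1 ≤ n → 1 ≤ k → k < l → l ≤ n →
    ∀ R : TM n, TM.e n i * (TM.genTie n k l * R) = TM.genTie n k l * (TM.e n i * R) := by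
  intro d
  induction d using Nat.strong_induction_on with
  | _ d IH =>
    intro i k l hd hi1 hi2 hk1 hkl hl R
    by_cases hb : l = k + 1
    · subst hb; rw [tie_base]; exact toCont2 (ee i k) R
    · have hb2 : k + 1 < l := by omega
      by_cases hA : k + 1 = i
      · subst hA
        by_cases hA2 : l = k + 1 + 2
        · have h5 : l = k + 3 := by omega
          subst h5
          exact Dbad k hk1 (by omega) R
        · obtain ⟨c, rfl⟩ : ∃ c, l = c + 1 := ⟨l - 1, by omega⟩
          have hcs : TM.e n (k+1) * TM.s n c = TM.s n c * TM.e n (k+1) := by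
            rcases eq_or_ne c (k+1) with h | h
            · rw [h]; exact es (k+1)
            · exact esf (k+1) c (by omega)
          have hcT : TM.e n (k+1) * TM.sInv n c = TM.sInv n c * TM.e n (k+1) := by
            rcases eq_or_ne c (k+1) with h | h
            · rw [h]; exact eT (k+1)
            · exact eTf (k+1) c (by omega)
          rw [tie_top k c hk1 (by omega) (by omega)]
          simp only [mul_assoc]
          rw [toCont2 hcs,
            IH (c - k) (by omega) (k+1) k c rfl (by omega) (by omega) hk1 (by omega) (by omega),
            toCont2 hcT]
      by_cases hB : k = i + 1
      · subst hB
        have aux3 : ∀ R' : TM n, TM.e n i * (TM.s n (i+1) * R')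
            = TM.s n (i+1) * (TM.genTie n i (i+2) * R') := by
          intro R'
          have h := conjS (n := n) 2 i (i+2) (i+1) (by omega) hi1 (by omega) (by omega) (by omega) (by omega) R'
          obtain ⟨h4, h5⟩ : min (sw (i+1) i) (sw (i+1) (i+2)) = i ∧
              max (sw (i+1) i) (sw (i+1) (i+2)) = i + 1 := by
            simp only [sw]; split_ifs <;> omega
          rw [h4, h5, tie_base] at h
          exact h.symm
        have aux4 : ∀ R' : TM n, TM.genTie n i (i+2) * (TM.sInv n (i+1) * R')
            = TM.sInv n (i+1) * (TM.e n i * R') := by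
          intro R'
          have h := conjT (n := n) i (i+1) (i+1) hi1 (by omega) (by omega) (by omega) (by omega) R'
          obtain ⟨h4, h5⟩ : min (sw (i+1) i) (sw (i+1) (i+1)) = i ∧
              max (sw (i+1) i) (sw (i+1) (i+1)) = i + 2 := by
            simp only [sw]; split_ifs <;> omega
          rw [h4, h5, tie_base] at h
          exact h.symm
        have hcomm : ∀ R' : TM n, TM.genTie n i (i+2) * (TM.genTie n (i+2) l * R')
            = TM.genTie n (i+2) l * (TM.genTie n i (i+2) * R') := by
          intro R'
          rw [tie_unfold i (i+2) (by omega), tie_base]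
          simp only [mul_assoc]
          rw [A_T (i+2) l i (by omega) (by omega),
            IH (l - (i+2)) (by omega) (i+1) (i+2) l rfl (by omega) (by omega) (by omega)
              (by omega) hl,
            A_S (l - (i+2)) (i+2) l i rfl (by omega) (by omega)]
        rw [tie_unfold (i+1) l hb2]
        simp only [mul_assoc]
        rw [aux3, hcomm, aux4]
      · have hcs : TM.e n i * TM.s n k = TM.s n k * TM.e n i := by
          rcases eq_or_ne k i with h | h
          · rw [h]; exact es i
          · exact esf i k (by omega)
        have hcT : TM.e n i * TM.sInv n k = TM.sInv n k * TM.e n i := by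
          rcases eq_or_ne k i with h | h
          · rw [h]; exact eT i
          · exact eTf i k (by omega)
        rw [tie_unfold k l hb2]
        simp only [mul_assoc]
        rw [toCont2 hcs,
          IH (l - (k+1)) (by omega) i (k+1) l rfl hi1 hi2 (by omega) (by omega) hl,
          toCont2 hcT]

lemma main : ∀ (d i j k l : ℕ), j - i = d → 1 ≤ i → i < j → j ≤ n → 1 ≤ k → k < l → l ≤ n →
    TM.genTie n i j * TM.genTie n k l = TM.genTie n k l * TM.genTie n i j := by
  intro d
  induction d using Nat.strong_induction_on with
  | _ d IH =>
    intro i j k l hd hi1 hij hj hk1 hkl hl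
    by_cases hb : j = i + 1
    · subst hb
      rw [tie_base]
      have := eComm (l - k) i k l rfl hi1 (by omega) hk1 hkl hl 1
      simp only [mul_one] at this
      exact this
    · have hb2 : i + 1 < j := by omega
      rw [tie_unfold i j hb2]
      simp only [mul_assoc]
      have hT := conjT k l i hk1 hkl hl hi1 (by omega) 1
      simp only [mul_one] at hT
      rw [hT]
      obtain ⟨hq1, hq2, hq3⟩ : 1 ≤ min (sw i k) (sw i l) ∧
          min (sw i k) (sw i l) < max (sw i k) (sw i l) ∧ max (sw i k) (sw i l) ≤ n := by
        simp only [sw]; split_ifs <;> omega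
      rw [toCont2 (IH (j - (i+1)) (by omega) (i+1) j (min (sw i k) (sw i l))
        (max (sw i k) (sw i l)) rfl (by omega) (by omega) hj hq1 hq2 hq3)]
      have hS := conjS (max (sw i k) (sw i l) - min (sw i k) (sw i l)) _ _ i rfl hq1 hq2 hq3
        hi1 (by omega) (TM.genTie n (i+1) j * TM.sInv n i)
      rw [hS]
      obtain ⟨h4, h5⟩ : min (sw i (min (sw i k) (sw i l))) (sw i (max (sw i k) (sw i l))) = k ∧
          max (sw i (min (sw i k) (sw i l))) (sw i (max (sw i k) (sw i l))) = l := by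
        simp only [sw]; split_ifs <;> omega
      rw [h4, h5]

end TML

/-- **Generalized ties pairwise commute**: for every n ≥ 2 and all indices
1 ≤ i < j ≤ n and 1 ≤ k < l ≤ n, η_{i,j} η_{k,l} = η_{k,l} η_{i,j} in `TM n`. -/
theorem tm_genTie_comm (n : ℕ) (hn : 2 ≤ n) (i j k l : ℕ)
    (hi : 1 ≤ i) (hij : i < j) (hj : j ≤ n)
    (hk : 1 ≤ k) (hkl : k < l) (hl : l ≤ n) :
    TM.genTie n i j * TM.genTie n k l = TM.genTie n k l * TM.genTie n i j := by
  exact TML.main (j - i) i j k l rfl hi hij hj hk hkl hl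
end

section
/- Transparency of generalized ties: for every n ≥ 2, all indices 1 ≤ i < j ≤ n and every 1 ≤ k ≤ n−1 with k ∉ {i−1, i, j−1, j}, the equalities σ_k η_{i,j} = η_{i,j} σ_k and σ_k⁻¹ η_{i,j} = η_{i,j} σ_k⁻¹ hold in the tied braid monoid TM_n. -/
/-! ### Auxiliary lemmas -/

section TMAux

variable {n : ℕ}

private lemma rel_eq {a b : FreeMonoid (TMGen n)} (h : TMRel n a b) :
    ((conGen (TMRel n)).mk' a : TM n) = (conGen (TMRel n)).mk' b :=
  (Con.eq _).mpr (ConGen.Rel.of _ _ h)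

private lemma s_one {i : ℕ} (h : ¬(1 ≤ i ∧ i ≤ n - 1)) : TM.s n i = 1 := by
  rw [TM.s, wS, dif_neg h, map_one]
  rfl

private lemma sInv_one {i : ℕ} (h : ¬(1 ≤ i ∧ i ≤ n - 1)) : TM.sInv n i = 1 := by
  rw [TM.sInv, wSI, dif_neg h, map_one]
  rfl

private lemma e_one {i : ℕ} (h : ¬(1 ≤ i ∧ i ≤ n - 1)) : TM.e n i = 1 := by
  rw [TM.e, wE, dif_neg h, map_one]
  rfl

private lemma s_sInv (i : ℕ) : TM.s n i * TM.sInv n i = 1 := by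
  by_cases h : 1 ≤ i ∧ i ≤ n - 1
  · have := rel_eq (TMRel.inv_right i h)
    exact this
  · rw [s_one h, sInv_one h, one_mul]

private lemma sInv_s (i : ℕ) : TM.sInv n i * TM.s n i = 1 := by
  by_cases h : 1 ≤ i ∧ i ≤ n - 1
  · have := rel_eq (TMRel.inv_left i h)
    exact this
  · rw [s_one h, sInv_one h, one_mul]

private lemma commute_inv {M : Type*} [Monoid M] {a a' b : M} (h1 : a * a' = 1)
    (h2 : a' * a = 1) (h : Commute a b) : Commute a' b := by
  show a' * b = b * a'
  calc a' * b = a' * b * (a * a') := by rw [h1, mul_one]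
    _ = a' * (b * a) * a' := by simp only [mul_assoc]
    _ = a' * (a * b) * a' := by rw [← h.eq]
    _ = (a' * a) * (b * a') := by simp only [mul_assoc]
    _ = b * a' := by rw [h2, one_mul]

private lemma comm_ss {i j : ℕ} (hij : i + 2 ≤ j ∨ j + 2 ≤ i) :
    Commute (TM.s n i) (TM.s n j) := by
  by_cases hi : 1 ≤ i ∧ i ≤ n - 1
  · by_cases hj : 1 ≤ j ∧ j ≤ n - 1
    · have := rel_eq (TMRel.sig_comm i j hi hj hij)
      show TM.s n i * TM.s n j = TM.s n j * TM.s n i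
      exact this
    · rw [s_one hj]; exact Commute.one_right _
  · rw [s_one hi]; exact Commute.one_left _

private lemma comm_se {k j : ℕ} (hij : j + 2 ≤ k ∨ k + 2 ≤ j) :
    Commute (TM.s n k) (TM.e n j) := by
  by_cases hj : 1 ≤ j ∧ j ≤ n - 1
  · by_cases hk : 1 ≤ k ∧ k ≤ n - 1
    · have := rel_eq (TMRel.eta_sig_far j k hj hk hij)
      have h' : TM.e n j * TM.s n k = TM.s n k * TM.e n j := by
        exact this
      exact h'.symm
    · rw [s_one hk]; exact Commute.one_left _
  · rw [e_one hj]; exact Commute.one_right _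

private lemma comm_ssInv {k x : ℕ} (hij : k + 2 ≤ x ∨ x + 2 ≤ k) :
    Commute (TM.s n k) (TM.sInv n x) :=
  (commute_inv (s_sInv x) (sInv_s x) (comm_ss hij.symm)).symm

private lemma braid' {i : ℕ} (h1 : 1 ≤ i) (h2 : i + 1 ≤ n - 1) :
    TM.s n i * TM.s n (i+1) * TM.s n i = TM.s n (i+1) * TM.s n i * TM.s n (i+1) := by
  have := rel_eq (TMRel.braid i ⟨h1, h2⟩)
  exact this

/-- The word σ_i σ_{i+1} ⋯ σ_{i+m-1} in `TM n`. -/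
private def PP (n i m : ℕ) : TM n := ((List.range' i m).map (TM.s n)).prod

/-- The word σ_{i+m-1}⁻¹ ⋯ σ_{i+1}⁻¹ σ_i⁻¹ in `TM n`. -/
private def QQ (n i m : ℕ) : TM n := ((List.range' i m).reverse.map (TM.sInv n)).prod

private lemma PP_succ (i m : ℕ) : PP n i (m+1) = TM.s n i * PP n (i+1) m := by
  rw [PP, PP, List.range'_succ]
  simp

private lemma QQ_succ (i m : ℕ) : QQ n i (m+1) = QQ n (i+1) m * TM.sInv n i := by
  rw [QQ, QQ, List.range'_succ]
  simp

private lemma PP_QQ (i m : ℕ) : PP n i m * QQ n i m = 1 := by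
  induction m generalizing i with
  | zero => simp [PP, QQ]
  | succ m ih =>
      rw [PP_succ, QQ_succ, mul_assoc, ← mul_assoc (PP n (i+1) m), ih, one_mul, s_sInv]

private lemma QQ_PP (i m : ℕ) : QQ n i m * PP n i m = 1 := by
  induction m generalizing i with
  | zero => simp [PP, QQ]
  | succ m ih =>
      rw [PP_succ, QQ_succ, mul_assoc, ← mul_assoc (TM.sInv n i), sInv_s, one_mul, ih]

private lemma comm_sPP {k i m : ℕ}
    (h : ∀ x, i ≤ x → x < i + m → (x + 2 ≤ k ∨ k + 2 ≤ x)) :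
    Commute (TM.s n k) (PP n i m) := by
  apply Commute.list_prod_right
  intro x hx
  simp only [List.mem_map, List.mem_range'_1] at hx
  obtain ⟨y, ⟨hy1, hy2⟩, rfl⟩ := hx
  exact comm_ss (h y hy1 hy2).symm

private lemma comm_sQQ {k i m : ℕ}
    (h : ∀ x, i ≤ x → x < i + m → (x + 2 ≤ k ∨ k + 2 ≤ x)) :
    Commute (TM.s n k) (QQ n i m) := by
  apply Commute.list_prod_right
  intro x hx
  simp only [List.mem_map, List.mem_reverse, List.mem_range'_1] at hx
  obtain ⟨y, ⟨hy1, hy2⟩, rfl⟩ := hx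
  exact comm_ssInv (h y hy1 hy2).symm

private lemma key {M : Type*} [Monoid M] {A B x y : M}
    (hA : y * A = A * y) (hB : x * B = B * x)
    (hbr : x * y * x = y * x * y) :
    y * (A * (x * y) * B) = A * (x * y) * B * x := by
  simp only [mul_assoc]
  rw [← hB, ← mul_assoc y A, hA, mul_assoc]
  congr 1
  simp only [← mul_assoc]
  rw [hbr]

private lemma slide {i a b : ℕ} (hi : 1 ≤ i) (hn : i + a + 2 ≤ n) :
    TM.s n (i+a+1) * PP n i (a+b+2) = PP n i (a+b+2) * TM.s n (i+a) := by
  have hlist : List.range' i (a+b+2)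
      = List.range' i a ++ ([i+a, i+a+1] ++ List.range' (i+a+2) b) := by
    have h1 : [i+a, i+a+1] = List.range' (i+a) 2 := by simp [List.range']
    rw [h1, List.range'_append_1, List.range'_append_1]
    congr 1
    omega
  have hsplit : PP n i (a+b+2) =
      PP n i a * (TM.s n (i+a) * TM.s n (i+a+1)) * PP n (i+a+2) b := by
    rw [PP, hlist]
    simp [PP, List.map_append, mul_assoc]
  have hA : Commute (TM.s n (i+a+1)) (PP n i a) :=
    comm_sPP (fun x _ hx2 => Or.inl (by omega))
  have hB : Commute (TM.s n (i+a)) (PP n (i+a+2) b) :=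
    comm_sPP (fun x hx1 _ => Or.inr (by omega))
  have hbr : TM.s n (i+a) * TM.s n (i+a+1) * TM.s n (i+a)
      = TM.s n (i+a+1) * TM.s n (i+a) * TM.s n (i+a+1) :=
    braid' (by omega) (by omega)
  rw [hsplit]
  exact key hA.eq hB.eq hbr

private lemma key2 {M : Type*} [Monoid M] {P E Q x y : M}
    (h1 : y * P = P * x) (h2 : x * E = E * x) (h3 : x * Q = Q * y) :
    y * (P * E * Q) = (P * E * Q) * y := by
  have hstep : y * (P * E * Q) = P * (x * E) * Q := by
    simp only [← mul_assoc]
    rw [h1]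
  rw [hstep, h2]
  simp only [mul_assoc]
  rw [h3]

private lemma genTie_comm (hn : 2 ≤ n) (i j k : ℕ) (hi : 1 ≤ i) (hij : i < j)
    (hj : j ≤ n) (hk1 : 1 ≤ k) (hk2 : k ≤ n - 1)
    (hki1 : k ≠ i - 1) (hki : k ≠ i) (hkj1 : k ≠ j - 1) (hkj : k ≠ j) :
    Commute (TM.s n k) (TM.genTie n i j) := by
  have hgt : TM.genTie n i j = PP n i (j-1-i) * TM.e n (j-1) * QQ n i (j-1-i) := rfl
  by_cases hfar : k + 2 ≤ i ∨ j + 1 ≤ k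
  · rw [hgt]
    have hP : Commute (TM.s n k) (PP n i (j-1-i)) :=
      comm_sPP (fun x h1 h2 => by omega)
    have hQ : Commute (TM.s n k) (QQ n i (j-1-i)) :=
      comm_sQQ (fun x h1 h2 => by omega)
    have hE : Commute (TM.s n k) (TM.e n (j-1)) := comm_se (by omega)
    exact (hP.mul_right hE).mul_right hQ
  · obtain ⟨a, b, rfl, rfl⟩ : ∃ a b, k = i + a + 1 ∧ j = i + a + b + 3 :=
      ⟨k - i - 1, j - k - 2, by omega, by omega⟩
    have hm : (i+a+b+3) - 1 - i = a+b+2 := by omega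
    have hj1 : (i+a+b+3) - 1 = i+a+b+2 := by omega
    rw [hgt, hm, hj1]
    have hn' : i + a + 2 ≤ n := by omega
    have hsP := slide (n := n) (i := i) (a := a) (b := b) hi hn'
    have hPQ := PP_QQ (n := n) i (a+b+2)
    have hQP := QQ_PP (n := n) i (a+b+2)
    have hsQ : TM.s n (i+a) * QQ n i (a+b+2) = QQ n i (a+b+2) * TM.s n (i+a+1) := by
      have h1 := congrArg (fun z => QQ n i (a+b+2) * z * QQ n i (a+b+2)) hsP
      simp only [mul_assoc] at h1
      rw [hPQ, mul_one] at h1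
      rw [← mul_assoc (QQ n i (a+b+2)) (PP n i (a+b+2)), hQP, one_mul] at h1
      exact h1.symm
    have hE : Commute (TM.s n (i+a)) (TM.e n (i+a+b+2)) := comm_se (Or.inr (by omega))
    exact key2 hsP hE.eq hsQ

end TMAux

/-- **Transparency of generalized ties**: for every n ≥ 2, all indices 1 ≤ i < j ≤ n
and every 1 ≤ k ≤ n−1 with k ∉ {i−1, i, j−1, j}, both σ_k and σ_k⁻¹ commute with
η_{i,j} in the tied braid monoid `TM n`. -/
theorem tm_genTie_transparent (n : ℕ) (hn : 2 ≤ n) (i j k : ℕ)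
    (hi : 1 ≤ i) (hij : i < j) (hj : j ≤ n)
    (hk1 : 1 ≤ k) (hk2 : k ≤ n - 1)
    (hki1 : k ≠ i - 1) (hki : k ≠ i) (hkj1 : k ≠ j - 1) (hkj : k ≠ j) :
    TM.s n k * TM.genTie n i j = TM.genTie n i j * TM.s n k ∧
    TM.sInv n k * TM.genTie n i j = TM.genTie n i j * TM.sInv n k := by
  have hc := genTie_comm hn i j k hi hij hj hk1 hk2 hki1 hki hkj1 hkj
  exact ⟨hc.eq, (commute_inv (s_sInv k) (sInv_s k) hc).eq⟩
end

section
/- Sliding a tie endpoint across a positive crossing (relation (ii) of the generalized-tie relations): for every n ≥ 2 and all indices 1 ≤ i < j ≤ n−1, the equality σ_j η_{i,j} = η_{i,j+1} σ_j holds in the tied braid monoid TM_n. -/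
section Aux

/-- Transfer a defining relation to an equality in the quotient. -/
lemma tm_rel_eq {n : ℕ} {x y : FreeMonoid (TMGen n)} (h : TMRel n x y) :
    (conGen (TMRel n)).mk' x = (conGen (TMRel n)).mk' y :=
  (Con.eq _).2 (ConGen.Rel.of _ _ h)

lemma tm_s_mul_sInv (n i : ℕ) : TM.s n i * TM.sInv n i = 1 := by
  by_cases h : 1 ≤ i ∧ i ≤ n - 1
  · have := tm_rel_eq (TMRel.inv_right i h)
    simp only [map_mul, map_one] at this; exact this
  · show (conGen (TMRel n)).mk' (wS n i) * (conGen (TMRel n)).mk' (wSI n i) = 1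
    rw [wS, wSI, dif_neg h, dif_neg h, map_one, one_mul]

lemma tm_sInv_mul_s (n i : ℕ) : TM.sInv n i * TM.s n i = 1 := by
  by_cases h : 1 ≤ i ∧ i ≤ n - 1
  · have := tm_rel_eq (TMRel.inv_left i h)
    simp only [map_mul, map_one] at this; exact this
  · show (conGen (TMRel n)).mk' (wSI n i) * (conGen (TMRel n)).mk' (wS n i) = 1
    rw [wS, wSI, dif_neg h, dif_neg h, map_one, one_mul]

lemma tm_sig_comm {n i j : ℕ} (hi : 1 ≤ i ∧ i ≤ n - 1) (hj : 1 ≤ j ∧ j ≤ n - 1)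
    (hij : i + 2 ≤ j ∨ j + 2 ≤ i) :
    TM.s n i * TM.s n j = TM.s n j * TM.s n i := by
  have h := tm_rel_eq (TMRel.sig_comm i j hi hj hij); simp only [map_mul] at h; exact h

lemma tm_slide_pos {n i j : ℕ} (hi : 1 ≤ i ∧ i ≤ n - 1) (hj : 1 ≤ j ∧ j ≤ n - 1)
    (hij : j = i + 1 ∨ i = j + 1) :
    TM.e n i * TM.s n j * TM.s n i = TM.s n j * TM.s n i * TM.e n j := by
  have h := tm_rel_eq (TMRel.eta_slide_pos i j hi hj hij); simp only [map_mul] at h; exact h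

lemma tm_slide_neg {n i j : ℕ} (hi : 1 ≤ i ∧ i ≤ n - 1) (hj : 1 ≤ j ∧ j ≤ n - 1)
    (hij : j = i + 1 ∨ i = j + 1) :
    TM.e n i * TM.s n j * TM.sInv n i = TM.s n j * TM.sInv n i * TM.e n j := by
  have h := tm_rel_eq (TMRel.eta_slide_neg i j hi hj hij); simp only [map_mul] at h; exact h

/-- In any monoid, if `x` is invertible and commutes with `y`, so does its inverse. -/
lemma tm_conj_comm {M : Type*} [Monoid M] {x xi y : M} (h1 : xi * x = 1) (h2 : x * xi = 1)
    (hc : x * y = y * x) : y * xi = xi * y := by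
  calc y * xi = (xi * x) * (y * xi) := by rw [h1, one_mul]
    _ = xi * ((x * y) * xi) := by simp only [mul_assoc]
    _ = xi * ((y * x) * xi) := by rw [hc]
    _ = xi * y * (x * xi) := by simp only [mul_assoc]
    _ = xi * y := by rw [h2, mul_one]

/-- The core computation: from the slide relations for adjacent indices,
`b e = a f ai b` (where `a, b` are the two crossings, `e, f` the two ties). -/
lemma tm_core {M : Type*} [Monoid M] (a ai b bi e f : M)
    (ha : a * ai = 1) (ha' : ai * a = 1) (hb' : bi * b = 1)
    (h1 : e * b * a = b * a * f) (h2 : e * b * ai = b * ai * f)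
    (h3 : f * a * b = a * b * e) :
    b * e = a * f * ai * b := by
  have Ca : ∀ x : M, a * (ai * x) = x := fun x => by rw [← mul_assoc, ha, one_mul]
  have Ca' : ∀ x : M, ai * (a * x) = x := fun x => by rw [← mul_assoc, ha', one_mul]
  have Cb' : ∀ x : M, bi * (b * x) = x := fun x => by rw [← mul_assoc, hb', one_mul]
  have stepA : e * (b * b) = b * (b * e) := by
    calc e * (b * b) = e * (b * (ai * (a * b))) := by rw [Ca']
      _ = (e * b * ai) * (a * b) := by simp only [mul_assoc]
      _ = (b * ai * f) * (a * b) := by rw [h2]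
      _ = b * (ai * (f * a * b)) := by simp only [mul_assoc]
      _ = b * (ai * (a * b * e)) := by rw [h3]
      _ = b * (ai * (a * (b * e))) := by simp only [mul_assoc]
      _ = b * (b * e) := by rw [Ca']
  have haf : a * f = bi * (e * (b * a)) := by
    have h := congrArg (bi * ·) h1.symm
    simp only [mul_assoc] at h
    rwa [Cb'] at h
  calc b * e = bi * (b * (b * e)) := (Cb' _).symm
    _ = bi * (e * (b * b)) := by rw [stepA]
    _ = bi * (e * (b * (a * (ai * b)))) := by rw [Ca]
    _ = (bi * (e * (b * a))) * (ai * b) := by simp only [mul_assoc]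
    _ = (a * f) * (ai * b) := by rw [← haf]
    _ = a * f * ai * b := by simp only [mul_assoc]

/-- An element commuting with every member of a list commutes with its product. -/
lemma tm_comm_prod {M : Type*} [Monoid M] (x : M) (l : List M)
    (h : ∀ y ∈ l, x * y = y * x) : x * l.prod = l.prod * x := by
  induction l with
  | nil => simp
  | cons a t ih =>
    have ha := h a (List.mem_cons_self)
    have ht := ih fun y hy => h y (List.mem_cons_of_mem a hy)
    simp only [List.prod_cons]
    calc x * (a * t.prod) = (x * a) * t.prod := by rw [mul_assoc]
      _ = a * (x * t.prod) := by rw [ha, mul_assoc]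
      _ = a * (t.prod * x) := by rw [ht]
      _ = a * t.prod * x := by rw [mul_assoc]

end Aux

/-- **Relation (ii) of the generalized-tie relations**: for every n ≥ 2 and indices
1 ≤ i < j ≤ n−1, σ_j η_{i,j} = η_{i,j+1} σ_j holds in `TM n`. -/
theorem tm_genTie_rel_ii (n : ℕ) (hn : 2 ≤ n) (i j : ℕ)
    (hi : 1 ≤ i) (hij : i < j) (hj : j ≤ n - 1) :
    TM.s n j * TM.genTie n i j = TM.genTie n i (j + 1) * TM.s n j := by
  have hjv : 1 ≤ j ∧ j ≤ n - 1 := ⟨by omega, hj⟩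
  have hj1v : 1 ≤ j - 1 ∧ j - 1 ≤ n - 1 := ⟨by omega, by omega⟩
  -- membership bounds for the conjugating word
  have hmem : ∀ k ∈ List.range' i (j - 1 - i), (1 ≤ k ∧ k ≤ n - 1) ∧ k + 2 ≤ j := by
    intro k hk
    rw [List.mem_range'_1] at hk
    exact ⟨⟨by omega, by omega⟩, by omega⟩
  set P : TM n := ((List.range' i (j - 1 - i)).map (TM.s n)).prod with hP
  set Q : TM n := ((List.range' i (j - 1 - i)).reverse.map (TM.sInv n)).prod with hQ
  -- σ_j commutes with P
  have hPb : TM.s n j * P = P * TM.s n j := by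
    apply tm_comm_prod
    intro y hy
    rw [List.mem_map] at hy
    obtain ⟨k, hk, rfl⟩ := hy
    obtain ⟨hkv, hk2⟩ := hmem k hk
    exact tm_sig_comm hjv hkv (Or.inr hk2)
  -- σ_j commutes with Q
  have hQb : TM.s n j * Q = Q * TM.s n j := by
    apply tm_comm_prod
    intro y hy
    rw [List.mem_map] at hy
    obtain ⟨k, hk, rfl⟩ := hy
    rw [List.mem_reverse] at hk
    obtain ⟨hkv, hk2⟩ := hmem k hk
    exact tm_conj_comm (tm_sInv_mul_s n k) (tm_s_mul_sInv n k)
      (tm_sig_comm hkv hjv (Or.inl hk2))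
  -- the core identity: σ_j η_{j-1} = σ_{j-1} η_j σ_{j-1}⁻¹ σ_j
  have hcore : TM.s n j * TM.e n (j - 1) =
      TM.s n (j - 1) * TM.e n j * TM.sInv n (j - 1) * TM.s n j := by
    refine tm_core (TM.s n (j - 1)) (TM.sInv n (j - 1)) (TM.s n j) (TM.sInv n j)
      (TM.e n (j - 1)) (TM.e n j) (tm_s_mul_sInv n (j - 1)) (tm_sInv_mul_s n (j - 1))
      (tm_sInv_mul_s n j) ?_ ?_ ?_
    · exact tm_slide_pos hj1v hjv (Or.inl (by omega))
    · exact tm_slide_neg hj1v hjv (Or.inl (by omega))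
    · exact tm_slide_pos hjv hj1v (Or.inr (by omega))
  -- unfold the generalized ties
  have e1 : j + 1 - 1 = j := by omega
  have e2 : j - i = (j - 1 - i) + 1 := by omega
  have e3 : i + (j - 1 - i) = j - 1 := by omega
  have hgt1 : TM.genTie n i j = P * TM.e n (j - 1) * Q := rfl
  have hgt2 : TM.genTie n i (j + 1) =
      (P * TM.s n (j - 1)) * TM.e n j * (TM.sInv n (j - 1) * Q) := by
    rw [TM.genTie, e1, e2, List.range'_1_concat, e3]
    simp only [List.map_append, List.prod_append, List.reverse_append,
      List.reverse_singleton, List.map_cons, List.map_nil, List.prod_cons, List.prod_nil,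
      List.singleton_append, mul_one, ← hP, ← hQ]
  rw [hgt1, hgt2]
  calc TM.s n j * (P * TM.e n (j - 1) * Q)
      = (TM.s n j * P) * (TM.e n (j - 1) * Q) := by simp only [mul_assoc]
    _ = (P * TM.s n j) * (TM.e n (j - 1) * Q) := by rw [hPb]
    _ = P * ((TM.s n j * TM.e n (j - 1)) * Q) := by simp only [mul_assoc]
    _ = P * ((TM.s n (j - 1) * TM.e n j * TM.sInv n (j - 1) * TM.s n j) * Q) := by rw [hcore]
    _ = P * (TM.s n (j - 1) * (TM.e n j * (TM.sInv n (j - 1) * (TM.s n j * Q)))) := by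
        simp only [mul_assoc]
    _ = P * (TM.s n (j - 1) * (TM.e n j * (TM.sInv n (j - 1) * (Q * TM.s n j)))) := by
        rw [hQb]
    _ = (P * TM.s n (j - 1)) * TM.e n j * (TM.sInv n (j - 1) * Q) * TM.s n j := by
        simp only [mul_assoc]
end

section
/- Relation (iv) of the generalized-tie relations: for every n ≥ 2 and all indices 1 ≤ i and i+1 < j ≤ n, the equality σ_{j−1} η_{i,j} = η_{i,j−1} σ_{j−1} holds in the tied braid monoid TM_n. -/
namespace TMAux

variable {n : ℕ}

lemma rel_eq {a b : FreeMonoid (TMGen n)} (h : TMRel n a b) :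
    (conGen (TMRel n)).mk' a = (conGen (TMRel n)).mk' b :=
  (Con.eq _).mpr (ConGen.Rel.of _ _ h)

lemma s_sInv (i : ℕ) (h : 1 ≤ i ∧ i ≤ n - 1) : TM.s n i * TM.sInv n i = 1 := by
  have := rel_eq (TMRel.inv_right i h)
  simp [TM.s, TM.sInv, map_mul, map_one] at this ⊢
  exact this

lemma sInv_s (i : ℕ) (h : 1 ≤ i ∧ i ≤ n - 1) : TM.sInv n i * TM.s n i = 1 := by
  have := rel_eq (TMRel.inv_left i h)
  simp [TM.s, TM.sInv, map_mul, map_one] at this ⊢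
  exact this

lemma s_comm (k m : ℕ) (hk : 1 ≤ k ∧ k ≤ n - 1) (hm : 1 ≤ m ∧ m ≤ n - 1)
    (h : k + 2 ≤ m) : TM.s n m * TM.s n k = TM.s n k * TM.s n m := by
  have := rel_eq (TMRel.sig_comm k m hk hm (Or.inl h))
  have h' : TM.s n k * TM.s n m = TM.s n m * TM.s n k := by
    simp [TM.s, map_mul] at this ⊢
    exact this
  exact h'.symm

lemma sInv_comm (k m : ℕ) (hk : 1 ≤ k ∧ k ≤ n - 1) (hm : 1 ≤ m ∧ m ≤ n - 1)
    (h : k + 2 ≤ m) : TM.s n m * TM.sInv n k = TM.sInv n k * TM.s n m := by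
  calc TM.s n m * TM.sInv n k
      = (TM.sInv n k * TM.s n k) * TM.s n m * TM.sInv n k := by
        rw [sInv_s k hk, one_mul]
    _ = TM.sInv n k * (TM.s n k * TM.s n m) * TM.sInv n k := by
        rw [mul_assoc (TM.sInv n k)]
    _ = TM.sInv n k * (TM.s n m * TM.s n k) * TM.sInv n k := by
        rw [← s_comm k m hk hm h]
    _ = TM.sInv n k * TM.s n m * (TM.s n k * TM.sInv n k) := by
        simp only [mul_assoc]
    _ = TM.sInv n k * TM.s n m := by rw [s_sInv k hk, mul_one]

lemma s_comm_prod (m : ℕ) (hm : 1 ≤ m ∧ m ≤ n - 1) :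
    ∀ l : List ℕ, (∀ k ∈ l, 1 ≤ k ∧ k ≤ n - 1 ∧ k + 2 ≤ m) →
      TM.s n m * (l.map (TM.s n)).prod = (l.map (TM.s n)).prod * TM.s n m
  | [], _ => by simp
  | k :: l, h => by
    have hk := h k List.mem_cons_self
    simp only [List.map_cons, List.prod_cons]
    rw [← mul_assoc, s_comm k m ⟨hk.1, hk.2.1⟩ hm hk.2.2, mul_assoc,
      s_comm_prod m hm l (fun x hx => h x (List.mem_cons_of_mem _ hx)), mul_assoc]

lemma sInv_comm_prod (m : ℕ) (hm : 1 ≤ m ∧ m ≤ n - 1) :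
    ∀ l : List ℕ, (∀ k ∈ l, 1 ≤ k ∧ k ≤ n - 1 ∧ k + 2 ≤ m) →
      TM.s n m * (l.map (TM.sInv n)).prod = (l.map (TM.sInv n)).prod * TM.s n m
  | [], _ => by simp
  | k :: l, h => by
    have hk := h k List.mem_cons_self
    simp only [List.map_cons, List.prod_cons]
    rw [← mul_assoc, sInv_comm k m ⟨hk.1, hk.2.1⟩ hm hk.2.2, mul_assoc,
      sInv_comm_prod m hm l (fun x hx => h x (List.mem_cons_of_mem _ hx)), mul_assoc]

lemma slide (a : ℕ) (ha : 1 ≤ a ∧ a ≤ n - 1) (hb : 1 ≤ a + 1 ∧ a + 1 ≤ n - 1) :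
    TM.e n a * TM.s n (a + 1) * TM.s n a
      = TM.s n (a + 1) * TM.s n a * TM.e n (a + 1) := by
  have := rel_eq (TMRel.eta_slide_pos a (a + 1) ha hb (Or.inl rfl))
  simp [TM.e, TM.s, map_mul] at this ⊢
  exact this

end TMAux

/-- **Relation (iv) of the generalized-tie relations**: for every n ≥ 2 and indices
1 ≤ i with i+1 < j ≤ n, σ_{j−1} η_{i,j} = η_{i,j−1} σ_{j−1} holds in `TM n`. -/
theorem tm_genTie_rel_iv (n : ℕ) (hn : 2 ≤ n) (i j : ℕ)
    (hi : 1 ≤ i) (hij : i + 1 < j) (hj : j ≤ n) :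
    TM.s n (j - 1) * TM.genTie n i j = TM.genTie n i (j - 1) * TM.s n (j - 1) := by
  open TMAux in
  set a := j - 2 with ha_def
  have hja : j - 1 = a + 1 := by omega
  have ha : 1 ≤ a ∧ a ≤ n - 1 := by omega
  have hb : 1 ≤ a + 1 ∧ a + 1 ≤ n - 1 := by omega
  have hsplit : List.range' i (j - 1 - i) = List.range' i (a - i) ++ [a] := by
    have h1 : j - 1 - i = (a - i) + 1 := by omega
    rw [h1, List.range'_concat]
    congr 2
    omega
  set P := ((List.range' i (a - i)).map (TM.s n)).prod with hP
  set PI := ((List.range' i (a - i)).reverse.map (TM.sInv n)).prod with hPI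
  have hmem : ∀ k ∈ List.range' i (a - i), 1 ≤ k ∧ k ≤ n - 1 ∧ k + 2 ≤ a + 1 := by
    intro k hk
    rw [List.mem_range'_1] at hk
    omega
  have hmem' : ∀ k ∈ (List.range' i (a - i)).reverse,
      1 ≤ k ∧ k ≤ n - 1 ∧ k + 2 ≤ a + 1 := by
    intro k hk
    exact hmem k (List.mem_reverse.mp hk)
  have commP : TM.s n (a + 1) * P = P * TM.s n (a + 1) :=
    s_comm_prod (a + 1) hb _ hmem
  have commPI : TM.s n (a + 1) * PI = PI * TM.s n (a + 1) :=
    sInv_comm_prod (a + 1) hb _ hmem'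
  have core : TM.s n (a + 1) * (TM.s n a * TM.e n (a + 1) * TM.sInv n a)
      = TM.e n a * TM.s n (a + 1) := by
    calc TM.s n (a + 1) * (TM.s n a * TM.e n (a + 1) * TM.sInv n a)
        = (TM.s n (a + 1) * TM.s n a * TM.e n (a + 1)) * TM.sInv n a := by
          simp only [mul_assoc]
      _ = (TM.e n a * TM.s n (a + 1) * TM.s n a) * TM.sInv n a := by
          rw [slide a ha hb]
      _ = TM.e n a * TM.s n (a + 1) * (TM.s n a * TM.sInv n a) := by
          simp only [mul_assoc]
      _ = TM.e n a * TM.s n (a + 1) := by rw [s_sInv a ha, mul_one]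
  have core' : ∀ x : TM n,
      TM.s n (a + 1) * (TM.s n a * (TM.e n (a + 1) * (TM.sInv n a * x)))
        = TM.e n a * (TM.s n (a + 1) * x) := by
    intro x
    have := congrArg (· * x) core
    simpa [mul_assoc] using this
  have hTieJ : TM.genTie n i j
      = P * (TM.s n a * (TM.e n (a + 1) * (TM.sInv n a * PI))) := by
    rw [TM.genTie, hsplit, hja]
    simp [List.reverse_append, mul_assoc, hP, hPI]
  have hTieJ' : TM.genTie n i (j - 1) = P * (TM.e n a * PI) := by
    have h2 : j - 1 - 1 = a := by omega
    rw [TM.genTie, h2, ← hP, ← hPI, mul_assoc]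
  rw [hTieJ, hTieJ', hja, ← mul_assoc, commP, mul_assoc, core' PI, commPI]
  simp only [mul_assoc]
end
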